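/- Consider a closed walk starting and ending at v_{1,0} in A(m,n) that fully traverses a set S of rows (each an odd number of times) whose maximum row index is m'. Then the cost of the walk is at least 2(m'-1) + (n+1)·|S|; hence if k(m') = 2·floor((B - 2(m'-1))/(2(n+1))), any such walk of cost at most B satisfies |S| ≤ k(m') + 1. -/

import Mathlib

lemma sum_count_le {β : Type*} [BEq β] [LawfulBEq β] [DecidableEq β] (T : Finset β) :
    ∀ (M : List β), ∑ ℓ ∈ T, M.count ℓ ≤ M.length := by
  intro M; induction M with
  | nil => simp
  | cons a M ih =>
    have h1 : ∑ ℓ ∈ T, (a :: M).count ℓ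
        = ∑ ℓ ∈ T, (M.count ℓ + if a = ℓ then 1 else 0) := by
      refine Finset.sum_congr rfl fun ℓ _ => ?_
      rw [List.count_cons]
      congr 1
      simp
    have h2 : (∑ ℓ ∈ T, if a = ℓ then 1 else 0) ≤ 1 := by
      rw [Finset.sum_ite_eq T a (fun _ => 1)]
      split <;> simp
    rw [h1, Finset.sum_add_distrib]
    simp only [List.length_cons]
    omega

lemma chain'_zip {α : Type*} {R : α → α → Prop} :
    ∀ {l : List α}, l.Chain' R → ∀ s ∈ l.zip l.tail, R s.1 s.2 := by
  intro l
  induction l with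
  | nil => simp
  | cons a l ih =>
    cases l with
    | nil => simp
    | cons b t =>
      intro h s hs
      unfold List.Chain' at h; rw [List.isChain_cons_cons] at h
      simp only [List.tail_cons, List.zip_cons_cons, List.mem_cons] at hs
      rcases hs with rfl | hs
      · exact h.1
      · exact ih h.2 s (by simpa using hs)

lemma exists_up (r : ℕ) :
    ∀ (l : List (ℕ × ℕ)) (p : ℕ × ℕ), l.head? = some p → p.1 ≤ r →
      ∀ q ∈ l, r < q.1 → ∃ s ∈ l.zip l.tail, s.1.1 ≤ r ∧ r < s.2.1 := by
  intro l
  induction l with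
  | nil => simp
  | cons a l ih =>
    intro p hp hpr q hq hqr
    simp only [List.head?_cons, Option.some.injEq] at hp
    subst hp
    cases l with
    | nil =>
      simp only [List.mem_singleton] at hq; subst hq; omega
    | cons b t =>
      by_cases hb : r < b.1
      · exact ⟨(a, b), by simp, hpr, hb⟩
      · have hq' : q ∈ b :: t := by
          rcases List.mem_cons.mp hq with rfl | h
          · omega
          · exact h
        obtain ⟨s, hs, h1, h2⟩ := ih b rfl (by omega) q hq' hqr
        have hmem : s ∈ (a :: b :: t).zip (a :: b :: t).tail := by
          simp only [List.tail_cons, List.zip_cons_cons, List.mem_cons]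
          right; simpa using hs
        exact ⟨s, hmem, h1, h2⟩

lemma exists_down (r : ℕ) :
    ∀ (l : List (ℕ × ℕ)) (p : ℕ × ℕ), l.getLast? = some p → p.1 ≤ r →
      ∀ q ∈ l, r < q.1 → ∃ s ∈ l.zip l.tail, r < s.1.1 ∧ s.2.1 ≤ r := by
  intro l
  induction l with
  | nil => simp
  | cons a l ih =>
    intro p hp hpr q hq hqr
    cases l with
    | nil =>
      simp only [List.getLast?_singleton, Option.some.injEq] at hp
      subst hp
      simp only [List.mem_singleton] at hq; subst hq; omega
    | cons b t =>
      have hp' : (b :: t).getLast? = some p := by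
        rw [List.getLast?_cons_cons] at hp; exact hp
      have step : (∃ s ∈ (b :: t).zip (b :: t).tail, r < s.1.1 ∧ s.2.1 ≤ r) →
          ∃ s ∈ (a :: b :: t).zip (a :: b :: t).tail, r < s.1.1 ∧ s.2.1 ≤ r := by
        rintro ⟨s, hs, h1, h2⟩
        have hmem : s ∈ (a :: b :: t).zip (a :: b :: t).tail := by
          simp only [List.tail_cons, List.zip_cons_cons, List.mem_cons]
          right; simpa using hs
        exact ⟨s, hmem, h1, h2⟩
      rcases List.mem_cons.mp hq with rfl | hq'
      · by_cases hb : b.1 ≤ r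
        · exact ⟨(q, b), by simp, hqr, hb⟩
        · exact step (ih p hp' hpr b (by simp) (by omega))
      · exact step (ih p hp' hpr q hq' hqr)




/-- Adjacency in the aisle-graph `A(m,n)`: vertices `(i,j)` with `1 ≤ i ≤ m`,
`0 ≤ j ≤ n+1`; row edges within a row, column edges in columns `0` and `n+1`. -/
def adjA (m n : ℕ) (p q : ℕ × ℕ) : Prop :=
  (p.1 = q.1 ∧ 1 ≤ p.1 ∧ p.1 ≤ m ∧ (p.2 + 1 = q.2 ∨ q.2 + 1 = p.2) ∧ p.2 ≤ n + 1 ∧ q.2 ≤ n + 1) ∨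
  (p.2 = q.2 ∧ (p.2 = 0 ∨ p.2 = n + 1) ∧ (p.1 + 1 = q.1 ∨ q.1 + 1 = p.1) ∧
    1 ≤ p.1 ∧ p.1 ≤ m ∧ 1 ≤ q.1 ∧ q.1 ≤ m)

/-- A tour: a closed walk starting and ending at `v_{1,0}`. -/
def IsTourA (m n : ℕ) (w : List (ℕ × ℕ)) : Prop :=
  w.Chain' (adjA m n) ∧ w.head? = some (1, 0) ∧ w.getLast? = some (1, 0)

/-- The cost of a walk is its number of edges. -/
def cost (w : List (ℕ × ℕ)) : ℕ := w.length - 1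

/-- Number of times the (undirected) edge `{p,q}` is traversed by the walk `w`. -/
def edgeCount (w : List (ℕ × ℕ)) (p q : ℕ × ℕ) : ℕ :=
  ((w.zip w.tail).count (p, q)) + ((w.zip w.tail).count (q, p))

/-- The walk `w` fully traverses row `i`: it contains all `n+1` edges of row `i`. -/
def FullyTraverses (n : ℕ) (w : List (ℕ × ℕ)) (i : ℕ) : Prop :=
  ∀ j ≤ n, 1 ≤ edgeCount w (i, j) (i, j + 1)

/-- if a tour fully traverses each row of `S` (each an odd number of
times), with furthest row `m'`, then its cost is at least `2(m'-1) + (n+1)|S|`;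
hence cost ≤ B implies `|S| ≤ k(m') + 1` where `k(m') = 2⌊(B-2(m'-1))/(2(n+1))⌋`. -/

theorem stmt4 (m n B : ℕ) (w : List (ℕ × ℕ)) (S : Finset ℕ) (m' : ℕ)
    (hw : IsTourA m n w)
    (hS : ∀ i ∈ S, 1 ≤ i ∧ i ≤ m)
    (hodd : ∀ i ∈ S, ∀ j ≤ n, Odd (edgeCount w (i, j) (i, j + 1)))
    (hSne : S.Nonempty) (hm'S : m' ∈ S) (hmax : ∀ i ∈ S, i ≤ m') :
    2 * (m' - 1) + (n + 1) * S.card ≤ cost w ∧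
      (cost w ≤ B → S.card ≤ 2 * ((B - 2 * (m' - 1)) / (2 * (n + 1))) + 1) := by
  classical
  obtain ⟨hchain, hhead, hlast⟩ := hw
  set L := w.zip w.tail with hL
  set lab : (ℕ × ℕ) × (ℕ × ℕ) → ℕ × ℕ × ℕ :=
    fun s => if s.1.1 = s.2.1 then (0, s.1.1, min s.1.2 s.2.2)
             else (1, s.1.1, s.2.1) with hlab
  set M := L.map lab with hM
  have hm'1 : 1 ≤ m' := (hS m' hm'S).1
  -- some vertex of row m' is in w
  have hmem : ∃ q ∈ w, q.1 = m' := by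
    have h := (hodd m' hm'S 0 (Nat.zero_le n)).pos
    unfold edgeCount at h
    rw [← hL] at h
    rcases (by omega : 0 < L.count ((m', 0), (m', 0 + 1)) ∨ 0 < L.count ((m', 0 + 1), (m', 0)))
      with h' | h'
    · have := List.of_mem_zip (List.count_pos_iff.mp h')
      exact ⟨(m', 0), this.1, rfl⟩
    · have := List.of_mem_zip (List.count_pos_iff.mp h')
      exact ⟨(m', 0 + 1), this.1, rfl⟩
  -- row-edge labels occur
  have hcount_row : ∀ i ∈ S, ∀ j ≤ n, 1 ≤ M.count (0, i, j) := by
    intro i hi j hj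
    have h := (hodd i hi j hj).pos
    unfold edgeCount at h
    rw [← hL] at h
    have hmem' : ∃ s ∈ L, lab s = (0, i, j) := by
      rcases (by omega : 0 < L.count ((i, j), (i, j + 1)) ∨
          0 < L.count ((i, j + 1), (i, j))) with h' | h'
      · exact ⟨_, List.count_pos_iff.mp h', by
          simp [hlab, Nat.min_eq_left (Nat.le_succ j)]⟩
      · exact ⟨_, List.count_pos_iff.mp h', by
          simp [hlab, Nat.min_eq_left (Nat.le_succ j)]⟩
    obtain ⟨s, hs, hls⟩ := hmem'
    rw [Nat.succ_le_iff, List.count_pos_iff]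
    rw [← hls]
    exact List.mem_map_of_mem hs
  -- vertical labels occur
  have hcount_up : ∀ r, 1 ≤ r → r < m' → 1 ≤ M.count (1, r, r + 1) := by
    intro r hr1 hrm
    obtain ⟨q, hq, hqm⟩ := hmem
    obtain ⟨s, hs, h1, h2⟩ := exists_up r w (1, 0) hhead (by simpa using hr1) q hq (by omega)
    have hadj := chain'_zip hchain s hs
    have h12 : s.1.1 = r ∧ s.2.1 = r + 1 := by
      rcases hadj with ⟨he, _⟩ | ⟨_, _, he, _⟩
      · omega
      · omega
    have hls : lab s = (1, r, r + 1) := by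
      simp only [hlab]
      rw [if_neg (by omega)]
      simp [h12.1, h12.2]
    rw [Nat.succ_le_iff, List.count_pos_iff, ← hls]
    exact List.mem_map_of_mem hs
  have hcount_dn : ∀ r, 1 ≤ r → r < m' → 1 ≤ M.count (1, r + 1, r) := by
    intro r hr1 hrm
    obtain ⟨q, hq, hqm⟩ := hmem
    obtain ⟨s, hs, h1, h2⟩ := exists_down r w (1, 0) hlast (by simpa using hr1) q hq (by omega)
    have hadj := chain'_zip hchain s hs
    have h12 : s.1.1 = r + 1 ∧ s.2.1 = r := by
      rcases hadj with ⟨he, _⟩ | ⟨_, _, he, _⟩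
      · omega
      · omega
    have hls : lab s = (1, r + 1, r) := by
      simp only [hlab]
      rw [if_neg (by omega)]
      simp [h12.1, h12.2]
    rw [Nat.succ_le_iff, List.count_pos_iff, ← hls]
    exact List.mem_map_of_mem hs
  -- the label sets
  set Trow : Finset (ℕ × ℕ × ℕ) :=
    (S ×ˢ Finset.range (n + 1)).image (fun x => ((0 : ℕ), x.1, x.2)) with hTrow
  set Tup : Finset (ℕ × ℕ × ℕ) :=
    (Finset.Icc 1 (m' - 1)).image (fun r => ((1 : ℕ), r, r + 1)) with hTup
  set Tdn : Finset (ℕ × ℕ × ℕ) :=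
    (Finset.Icc 1 (m' - 1)).image (fun r => ((1 : ℕ), r + 1, r)) with hTdn
  have hcard_row : Trow.card = S.card * (n + 1) := by
    rw [hTrow, Finset.card_image_of_injective _ (fun a b h => by
      simpa [Prod.ext_iff] using h)]
    simp [Finset.card_product]
  have hcard_up : Tup.card = m' - 1 := by
    rw [hTup, Finset.card_image_of_injective _ (fun a b h => by
      simpa [Prod.ext_iff] using h)]
    simp [Nat.card_Icc]
  have hcard_dn : Tdn.card = m' - 1 := by
    rw [hTdn, Finset.card_image_of_injective _ (fun a b h => by
      simpa [Prod.ext_iff] using h)]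
    simp [Nat.card_Icc]
  have hdisj1 : Disjoint Tup Tdn := by
    rw [Finset.disjoint_left]
    intro x hx hx'
    simp only [hTup, hTdn, Finset.mem_image, Finset.mem_Icc] at hx hx'
    obtain ⟨r, _, rfl⟩ := hx
    obtain ⟨r', _, he⟩ := hx'
    simp only [Prod.ext_iff] at he
    omega
  have hdisj2 : Disjoint Trow (Tup ∪ Tdn) := by
    rw [Finset.disjoint_left]
    intro x hx hx'
    simp only [hTrow, hTup, hTdn, Finset.mem_union, Finset.mem_image,
      Finset.mem_product, Finset.mem_range, Finset.mem_Icc] at hx hx'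
    obtain ⟨⟨i, j⟩, _, rfl⟩ := hx
    rcases hx' with ⟨r, _, he⟩ | ⟨r, _, he⟩ <;>
      · simp only [Prod.ext_iff] at he; omega
  have hcardT : (Trow ∪ (Tup ∪ Tdn)).card = S.card * (n + 1) + 2 * (m' - 1) := by
    rw [Finset.card_union_of_disjoint hdisj2, Finset.card_union_of_disjoint hdisj1,
      hcard_row, hcard_up, hcard_dn]
    ring
  have hall : ∀ ℓ ∈ Trow ∪ (Tup ∪ Tdn), 1 ≤ M.count ℓ := by
    intro ℓ hℓ
    simp only [hTrow, hTup, hTdn, Finset.mem_union, Finset.mem_image,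
      Finset.mem_product, Finset.mem_range, Finset.mem_Icc] at hℓ
    rcases hℓ with ⟨⟨i, j⟩, ⟨hi, hj⟩, rfl⟩ | ⟨r, hr, rfl⟩ | ⟨r, hr, rfl⟩
    · exact hcount_row i hi j (by omega)
    · exact hcount_up r hr.1 (by omega)
    · exact hcount_dn r hr.1 (by omega)
  have hlenM : M.length = cost w := by
    rw [hM, List.length_map, hL, List.length_zip, List.length_tail]
    unfold cost
    omega
  have hsum : (Trow ∪ (Tup ∪ Tdn)).card ≤ ∑ ℓ ∈ Trow ∪ (Tup ∪ Tdn), M.count ℓ := by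
    calc (Trow ∪ (Tup ∪ Tdn)).card = ∑ _ℓ ∈ Trow ∪ (Tup ∪ Tdn), 1 := by simp
    _ ≤ _ := Finset.sum_le_sum hall
  have main : 2 * (m' - 1) + (n + 1) * S.card ≤ cost w := by
    have h := le_trans hsum (sum_count_le _ M)
    rw [hcardT, hlenM] at h
    linarith [h]
  refine ⟨main, fun hB => ?_⟩
  by_contra hcon
  push_neg at hcon
  set C := B - 2 * (m' - 1) with hC
  set d := C / (2 * (n + 1)) with hd
  have hmB : 2 * (m' - 1) ≤ B := le_trans (le_trans (Nat.le_add_right _ _) main) hB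
  have hC2 : C + 2 * (m' - 1) = B := by omega
  have h1 : (n + 1) * S.card ≤ C := by
    have h := le_trans main hB
    linarith [h]
  have h2 : C < 2 * (n + 1) * (d + 1) := Nat.lt_mul_div_succ C (by positivity)
  have h4 : (n + 1) * (2 * d + 2) ≤ (n + 1) * S.card :=
    Nat.mul_le_mul_left _ (by omega)
  have h5 : 2 * (n + 1) * (d + 1) = (n + 1) * (2 * d + 2) := by ring
  linarith [h1, h2, h4, h5]
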